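/- arXiv:2504.17745 — 4 statements merged into one kernel-verified Lean document; each statement's English description precedes it below -/
import Mathlib

section
/- Let v : ℝ → ℝ be twice continuously differentiable with compact support. Then −∫_ℝ v''(x) v(x) |x| dx = ∫_ℝ (v'(x))² |x| dx − v(0)². In particular, −∫_ℝ v''(x) v(x) |x| dx ≥ −v(0)². -/
open MeasureTheory Set Filter Topology

lemma aux_tendsto_zero_atTop {F : ℝ → ℝ} (hF : HasCompactSupport F) :
    Tendsto F atTop (𝓝 0) := by
  obtain ⟨R, hR⟩ := hF.isBounded.subset_closedBall 0
  have h0 : ∀ᶠ x in atTop, F x = 0 := by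
    filter_upwards [eventually_gt_atTop R] with x hx
    apply image_eq_zero_of_notMem_tsupport
    intro hmem
    have := hR hmem
    simp only [Metric.mem_closedBall, Real.dist_eq, sub_zero] at this
    have := le_abs_self x
    linarith
  exact tendsto_const_nhds.congr' (h0.mono fun x hx => hx.symm)

lemma aux_tendsto_zero_atBot {F : ℝ → ℝ} (hF : HasCompactSupport F) :
    Tendsto F atBot (𝓝 0) := by
  obtain ⟨R, hR⟩ := hF.isBounded.subset_closedBall 0
  have h0 : ∀ᶠ x in atBot, F x = 0 := by
    filter_upwards [eventually_lt_atBot (-R)] with x hx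
    apply image_eq_zero_of_notMem_tsupport
    intro hmem
    have := hR hmem
    simp only [Metric.mem_closedBall, Real.dist_eq, sub_zero] at this
    have := neg_abs_le x
    linarith
  exact tendsto_const_nhds.congr' (h0.mono fun x hx => hx.symm)

set_option maxHeartbeats 1000000 in
/-- For `v` a `C²` compactly supported function,
`-∫ v'' v |x| dx = ∫ (v')² |x| dx - v(0)²`, and in particular `-∫ v'' v |x| dx ≥ -v(0)²`. -/
theorem weighted_second_derivative_identity
    (v : ℝ → ℝ) (hv : ContDiff ℝ 2 v) (hsupp : HasCompactSupport v) :
    (-∫ x : ℝ, deriv (deriv v) x * v x * |x|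
        = (∫ x : ℝ, (deriv v x) ^ 2 * |x|) - v 0 ^ 2) ∧
    -(v 0 ^ 2) ≤ -∫ x : ℝ, deriv (deriv v) x * v x * |x| := by
  have hcv : Continuous v := hv.continuous
  have hdv : ContDiff ℝ 1 (deriv v) := (contDiff_succ_iff_deriv.mp (show ContDiff ℝ (1+1) v by norm_num; exact hv)).2.2
  have hcv1 : Continuous (deriv v) := hdv.continuous
  have hcv2 : Continuous (deriv (deriv v)) := hdv.continuous_deriv le_rfl
  have hdiff : Differentiable ℝ v := hv.differentiable (by norm_num)
  have hdiff1 : Differentiable ℝ (deriv v) := hdv.differentiable (by norm_num)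
  have hs1 : HasCompactSupport (deriv v) := hsupp.deriv
  have hs2 : HasCompactSupport (deriv (deriv v)) := hs1.deriv
  -- compact supports for the relevant products
  have hcsA : HasCompactSupport (fun x => deriv (deriv v) x * v x * |x|) :=
    (hs2.mul_right).mul_right
  have hcsB : HasCompactSupport (fun x => (deriv v x) ^ 2 * |x|) := by
    apply HasCompactSupport.mul_right
    exact (hs1.mul_right : HasCompactSupport ((deriv v) * (deriv v))).comp_homeomorph
      (Homeomorph.refl ℝ) |>.mono (by
        intro x hx
        simp only [Function.mem_support, ne_eq] at hx ⊢
        intro h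
        apply hx
        simp [Homeomorph.refl, h, pow_two] at *
        exact h)
  have hcsC : HasCompactSupport (fun x => deriv v x * v x) := hs1.mul_right
  have hcsD : HasCompactSupport (fun x => deriv (deriv v) x * v x * x) :=
    (hs2.mul_right).mul_right
  have hcsE : HasCompactSupport (fun x => (deriv v x) ^ 2 * x) := by
    apply HasCompactSupport.mul_right (f := fun x => (deriv v x)^2)
    apply hs1.mono
    intro x hx
    simp only [Function.mem_support, ne_eq] at hx ⊢
    intro h; exact hx (by simp [h])
  -- integrabilities
  have hIA : Integrable (fun x => deriv (deriv v) x * v x * |x|) :=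
    (((hcv2.mul hcv).mul continuous_abs)).integrable_of_hasCompactSupport hcsA
  have hIB : Integrable (fun x => (deriv v x) ^ 2 * |x|) :=
    (((hcv1.pow 2).mul continuous_abs)).integrable_of_hasCompactSupport hcsB
  have hIC : Integrable (fun x => deriv v x * v x) :=
    (hcv1.mul hcv).integrable_of_hasCompactSupport hcsC
  have hID : Integrable (fun x => deriv (deriv v) x * v x * x) :=
    (((hcv2.mul hcv).mul continuous_id)).integrable_of_hasCompactSupport hcsD
  have hIE : Integrable (fun x => (deriv v x) ^ 2 * x) :=
    (((hcv1.pow 2).mul continuous_id)).integrable_of_hasCompactSupport hcsE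
  -- boundary functions
  set F : ℝ → ℝ := fun x => deriv v x * v x * x with hF
  set G : ℝ → ℝ := fun x => v x ^ 2 / 2 with hG
  have hFcs : HasCompactSupport F := hcsC.mul_right
  have hGcs : HasCompactSupport G := by
    apply hsupp.mono
    intro x hx
    simp only [Function.mem_support, ne_eq, hG] at hx ⊢
    intro h; exact hx (by simp [h])
  have hFd : ∀ x : ℝ, HasDerivAt F
      (deriv (deriv v) x * v x * x + (deriv v x) ^ 2 * x + deriv v x * v x) x := by
    intro x
    have h1 : HasDerivAt v (deriv v x) x := (hdiff x).hasDerivAt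
    have h2 : HasDerivAt (deriv v) (deriv (deriv v) x) x := (hdiff1 x).hasDerivAt
    have := ((h2.mul h1).mul (hasDerivAt_id x))
    refine this.congr_deriv ?_
    simp only [id_eq, id, Pi.mul_apply]
    ring
  have hGd : ∀ x : ℝ, HasDerivAt G (deriv v x * v x) x := by
    intro x
    have h1 : HasDerivAt v (deriv v x) x := (hdiff x).hasDerivAt
    have := (h1.pow 2).div_const 2
    refine this.congr_deriv ?_
    norm_num
    ring
  have hFtop := aux_tendsto_zero_atTop hFcs
  have hFbot := aux_tendsto_zero_atBot hFcs
  have hGtop := aux_tendsto_zero_atTop hGcs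
  have hGbot := aux_tendsto_zero_atBot hGcs
  have hF0 : F 0 = 0 := by simp [hF]
  -- integral of F' over Ioi 0
  have hIoiF : ∫ x in Ioi (0:ℝ),
      (deriv (deriv v) x * v x * x + (deriv v x) ^ 2 * x + deriv v x * v x) = 0 - F 0 :=
    integral_Ioi_of_hasDerivAt_of_tendsto' (fun x _ => hFd x)
      ((hID.add hIE).add hIC).integrableOn hFtop
  have hIicF : ∫ x in Iic (0:ℝ),
      (deriv (deriv v) x * v x * x + (deriv v x) ^ 2 * x + deriv v x * v x) = F 0 - 0 :=
    integral_Iic_of_hasDerivAt_of_tendsto' (fun x _ => hFd x)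
      ((hID.add hIE).add hIC).integrableOn hFbot
  have hIoiG : ∫ x in Ioi (0:ℝ), deriv v x * v x = 0 - G 0 :=
    integral_Ioi_of_hasDerivAt_of_tendsto' (fun x _ => hGd x) hIC.integrableOn hGtop
  have hIicG : ∫ x in Iic (0:ℝ), deriv v x * v x = G 0 - 0 :=
    integral_Iic_of_hasDerivAt_of_tendsto' (fun x _ => hGd x) hIC.integrableOn hGbot
  -- split the sums
  have hDE : Integrable (fun x => deriv (deriv v) x * v x * x + deriv v x ^ 2 * x) :=
    hID.add hIE
  have hsplitIoi :
      (∫ x in Ioi (0:ℝ), deriv (deriv v) x * v x * x)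
        + (∫ x in Ioi (0:ℝ), (deriv v x) ^ 2 * x)
        + (∫ x in Ioi (0:ℝ), deriv v x * v x) = - F 0 := by
    have h := hIoiF
    rw [integral_add hDE.integrableOn hIC.integrableOn,
        integral_add hID.integrableOn hIE.integrableOn] at h
    simpa using h
  have hsplitIic :
      (∫ x in Iic (0:ℝ), deriv (deriv v) x * v x * x)
        + (∫ x in Iic (0:ℝ), (deriv v x) ^ 2 * x)
        + (∫ x in Iic (0:ℝ), deriv v x * v x) = F 0 := by
    have h := hIicF
    rw [integral_add hDE.integrableOn hIC.integrableOn,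
        integral_add hID.integrableOn hIE.integrableOn] at h
    simpa using h
  -- relate |x| with x on each half line
  have habsIoi : ∀ f : ℝ → ℝ, (∫ x in Ioi (0:ℝ), f x * |x|) = ∫ x in Ioi (0:ℝ), f x * x := by
    intro f
    apply setIntegral_congr_fun (by measurability)
    intro x hx
    have h : |x| = x := abs_of_nonneg (le_of_lt hx)
    simp [h]
  have habsIic : ∀ f : ℝ → ℝ, (∫ x in Iic (0:ℝ), f x * |x|) = -∫ x in Iic (0:ℝ), f x * x := by
    intro f
    rw [← integral_neg]
    apply setIntegral_congr_fun (by measurability)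
    intro x hx
    have h : |x| = -x := abs_of_nonpos hx
    simp [h, mul_neg]
  -- assemble
  have hG0 : G 0 = v 0 ^ 2 / 2 := rfl
  have key : ∫ x : ℝ, deriv (deriv v) x * v x * |x|
      = -(∫ x : ℝ, (deriv v x) ^ 2 * |x|) + v 0 ^ 2 := by
    rw [← intervalIntegral.integral_Iic_add_Ioi (b := (0:ℝ)) hIA.integrableOn hIA.integrableOn,
        ← intervalIntegral.integral_Iic_add_Ioi (b := (0:ℝ)) hIB.integrableOn hIB.integrableOn,
        habsIoi (fun x => deriv (deriv v) x * v x), habsIic (fun x => deriv (deriv v) x * v x),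
        habsIoi (fun x => (deriv v x) ^ 2), habsIic (fun x => (deriv v x) ^ 2)]
    have e1 : ∫ x in Ioi (0:ℝ), deriv (deriv v) x * v x * x
        = - (∫ x in Ioi (0:ℝ), (deriv v x) ^ 2 * x) - (0 - G 0) := by
      rw [← hIoiG]; linarith [hsplitIoi, hF0]
    have e2 : ∫ x in Iic (0:ℝ), deriv (deriv v) x * v x * x
        = - (∫ x in Iic (0:ℝ), (deriv v x) ^ 2 * x) - (G 0 - 0) := by
      rw [← hIicG]; linarith [hsplitIic, hF0]
    rw [e1, e2, hG0]
    ring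
  constructor
  · rw [key]; ring
  · rw [key]
    have : 0 ≤ ∫ x : ℝ, (deriv v x) ^ 2 * |x| :=
      integral_nonneg fun x => mul_nonneg (sq_nonneg _) (abs_nonneg _)
    linarith
end

section
/- Let v : ℝ → ℝ be three times continuously differentiable with compact support. Then ∫_ℝ v'''(x) v(x) |x| dx = (3/2) ∫_ℝ (v'(x))² sgn(x) dx + 2 v(0) v'(0). In particular, |∫_ℝ v'''(x) v(x) |x| dx| ≤ (3/2) ∫_ℝ (v'(x))² dx + 2 |v(0)| |v'(0)|. -/
open MeasureTheory Set Filter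

/-- For `v` a `C³` compactly supported function,
`∫ v''' v |x| dx = (3/2) ∫ (v')² sgn(x) dx + 2 v(0) v'(0)`, and consequently
`|∫ v''' v |x| dx| ≤ (3/2) ∫ (v')² dx + 2 |v(0)| |v'(0)|`. -/
theorem weighted_third_derivative_identity
    (v : ℝ → ℝ) (hv : ContDiff ℝ 3 v) (hsupp : HasCompactSupport v) :
    (∫ x : ℝ, deriv (deriv (deriv v)) x * v x * |x|
        = (3 / 2) * (∫ x : ℝ, (deriv v x) ^ 2 * Real.sign x) + 2 * v 0 * deriv v 0) ∧
    abs (∫ x : ℝ, deriv (deriv (deriv v)) x * v x * |x|)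
        ≤ (3 / 2) * (∫ x : ℝ, (deriv v x) ^ 2) + 2 * |v 0| * |deriv v 0| := by
  set v1 := deriv v with hv1def
  set v2 := deriv v1 with hv2def
  set v3 := deriv v2 with hv3def
  have hv' : ContDiff ℝ 2 v1 := by
    have : ContDiff ℝ (2+1) v := by norm_num; exact hv
    exact (contDiff_succ_iff_deriv.mp this).2.2
  have hv'' : ContDiff ℝ 1 v2 := by
    have : ContDiff ℝ (1+1) v1 := by norm_num; exact hv'
    exact (contDiff_succ_iff_deriv.mp this).2.2
  have hs1 : HasCompactSupport v1 := hsupp.deriv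
  have hs2 : HasCompactSupport v2 := hs1.deriv
  have hc0 : Continuous v := hv.continuous
  have hc1 : Continuous v1 := hv'.continuous
  have hc2 : Continuous v2 := hv''.continuous
  have hc3 : Continuous v3 := hv''.continuous_deriv le_rfl
  have hd0 : ∀ x : ℝ, HasDerivAt v (v1 x) x :=
    fun x => ((hv.differentiable (by norm_num)) x).hasDerivAt
  have hd1 : ∀ x : ℝ, HasDerivAt v1 (v2 x) x :=
    fun x => ((hv'.differentiable (by norm_num)) x).hasDerivAt
  have hd2 : ∀ x : ℝ, HasDerivAt v2 (v3 x) x :=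
    fun x => ((hv''.differentiable (by norm_num)) x).hasDerivAt
  set G : ℝ → ℝ := fun x => (v2 x * v x - (1/2) * (v1 x * v1 x)) * x - v x * v1 x with hGdef
  have hG : ∀ x : ℝ, HasDerivAt G (v3 x * v x * x - (3/2) * (v1 x)^2) x := by
    intro x
    have h := ((((hd2 x).mul (hd0 x)).sub
        (HasDerivAt.const_mul (1/2 : ℝ) ((hd1 x).mul (hd1 x)))).mul (hasDerivAt_id x)).sub
        ((hd0 x).mul (hd1 x))
    refine h.congr_deriv ?_
    simp only [id, Pi.sub_apply, Pi.mul_apply]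
    ring
  have hGsupp : HasCompactSupport G := by
    apply HasCompactSupport.intro (hsupp.union hs1)
    intro x hx
    simp only [Set.mem_union, not_or] at hx
    have h0 : v x = 0 := image_eq_zero_of_notMem_tsupport hx.1
    have h1 : v1 x = 0 := image_eq_zero_of_notMem_tsupport hx.2
    simp [hGdef, h0, h1]
  have hGz := hasCompactSupport_iff_eventuallyEq.mp hGsupp
  rw [Filter.coclosedCompact_eq_cocompact] at hGz
  have htop : Tendsto G atTop (nhds 0) := (hGz.filter_mono atTop_le_cocompact).tendsto
  have hbot : Tendsto G atBot (nhds 0) := (hGz.filter_mono atBot_le_cocompact).tendsto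
  -- Integrability facts
  have hA : Integrable (fun x : ℝ => v3 x * v x * x) := by
    apply Continuous.integrable_of_hasCompactSupport ((hc3.mul hc0).mul continuous_id)
    apply HasCompactSupport.intro hsupp
    intro x hx
    simp [image_eq_zero_of_notMem_tsupport hx]
  have hB : Integrable (fun x : ℝ => (v1 x)^2) := by
    apply Continuous.integrable_of_hasCompactSupport (hc1.pow 2)
    apply HasCompactSupport.intro hs1
    intro x hx
    simp [image_eq_zero_of_notMem_tsupport hx]
  have hint : Integrable (fun x : ℝ => v3 x * v x * x - (3/2) * (v1 x)^2) :=
    hA.sub (hB.const_mul _)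
  have hAbs : Integrable (fun x : ℝ => v3 x * v x * |x|) := by
    apply Continuous.integrable_of_hasCompactSupport ((hc3.mul hc0).mul continuous_abs)
    apply HasCompactSupport.intro hsupp
    intro x hx
    simp [image_eq_zero_of_notMem_tsupport hx]
  have hsgn_meas : Measurable Real.sign := by
    have : Real.sign = fun r : ℝ => if r < 0 then (-1:ℝ) else if 0 < r then 1 else 0 := rfl
    rw [this]
    exact Measurable.ite (measurableSet_lt measurable_id measurable_const) measurable_const
      (Measurable.ite (measurableSet_lt measurable_const measurable_id) measurable_const
        measurable_const)
  have hsgn_bdd : ∀ x : ℝ, ‖Real.sign x‖ ≤ 1 := by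
    intro x
    rcases Real.sign_apply_eq x with h | h | h <;> simp [h]
  have hS : Integrable (fun x : ℝ => (v1 x)^2 * Real.sign x) := by
    have := hB.bdd_mul (c := 1) hsgn_meas.aestronglyMeasurable (Filter.Eventually.of_forall hsgn_bdd)
    simpa [mul_comm] using this
  -- FTC on each half line
  have hG0 : G 0 = -(v 0 * v1 0) := by simp [hGdef]
  have hIoi : ∫ x in Ioi (0:ℝ), (v3 x * v x * x - (3/2) * (v1 x)^2) = 0 - G 0 :=
    integral_Ioi_of_hasDerivAt_of_tendsto' (fun x _ => hG x) hint.integrableOn htop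
  have hIic : ∫ x in Iic (0:ℝ), (v3 x * v x * x - (3/2) * (v1 x)^2) = G 0 - 0 :=
    integral_Iic_of_hasDerivAt_of_tendsto' (fun x _ => hG x) hint.integrableOn hbot
  rw [integral_sub hA.integrableOn (hB.integrableOn.const_mul _),
      integral_const_mul, hG0, zero_sub, neg_neg] at hIoi
  rw [integral_sub hA.integrableOn (hB.integrableOn.const_mul _),
      integral_const_mul, hG0, sub_zero] at hIic
  -- rewrite |x| and sign on each half line
  have eIoiAbs : ∫ x in Ioi (0:ℝ), v3 x * v x * |x| = ∫ x in Ioi (0:ℝ), v3 x * v x * x := by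
    apply setIntegral_congr_fun measurableSet_Ioi
    intro x hx
    dsimp only
    rw [abs_of_pos hx.out]
  have eIicAbs : ∫ x in Iic (0:ℝ), v3 x * v x * |x| = -∫ x in Iic (0:ℝ), v3 x * v x * x := by
    rw [← integral_neg]
    apply setIntegral_congr_fun measurableSet_Iic
    intro x hx
    dsimp only
    rw [abs_of_nonpos hx.out]
    ring
  have eIoiSgn : ∫ x in Ioi (0:ℝ), (v1 x)^2 * Real.sign x = ∫ x in Ioi (0:ℝ), (v1 x)^2 := by
    apply setIntegral_congr_fun measurableSet_Ioi
    intro x hx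
    dsimp only
    rw [Real.sign_of_pos hx.out, mul_one]
  have eIicSgn : ∫ x in Iic (0:ℝ), (v1 x)^2 * Real.sign x = -∫ x in Iic (0:ℝ), (v1 x)^2 := by
    rw [integral_Iic_eq_integral_Iio, ← integral_neg, integral_Iic_eq_integral_Iio]
    apply setIntegral_congr_fun measurableSet_Iio
    intro x hx
    dsimp only
    rw [Real.sign_of_neg hx.out]
    ring
  have hsplitAbs : ∫ x : ℝ, v3 x * v x * |x|
      = (∫ x in Iic (0:ℝ), v3 x * v x * |x|) + ∫ x in Ioi (0:ℝ), v3 x * v x * |x| :=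
    (intervalIntegral.integral_Iic_add_Ioi hAbs.integrableOn hAbs.integrableOn).symm
  have hsplitSgn : ∫ x : ℝ, (v1 x)^2 * Real.sign x
      = (∫ x in Iic (0:ℝ), (v1 x)^2 * Real.sign x) + ∫ x in Ioi (0:ℝ), (v1 x)^2 * Real.sign x :=
    (intervalIntegral.integral_Iic_add_Ioi hS.integrableOn hS.integrableOn).symm
  have key : ∫ x : ℝ, v3 x * v x * |x|
      = (3/2) * (∫ x : ℝ, (v1 x)^2 * Real.sign x) + 2 * v 0 * v1 0 := by
    rw [hsplitAbs, hsplitSgn, eIoiAbs, eIicAbs, eIoiSgn, eIicSgn]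
    linarith [hIoi, hIic]
  refine ⟨key, ?_⟩
  rw [key]
  have h1 : |(3/2 : ℝ) * (∫ x : ℝ, (v1 x)^2 * Real.sign x) + 2 * v 0 * v1 0|
      ≤ (3/2) * |∫ x : ℝ, (v1 x)^2 * Real.sign x| + 2 * |v 0| * |v1 0| := by
    calc |(3/2 : ℝ) * (∫ x : ℝ, (v1 x)^2 * Real.sign x) + 2 * v 0 * v1 0|
        ≤ |(3/2 : ℝ) * (∫ x : ℝ, (v1 x)^2 * Real.sign x)| + |2 * v 0 * v1 0| := abs_add_le _ _
      _ = (3/2) * |∫ x : ℝ, (v1 x)^2 * Real.sign x| + 2 * |v 0| * |v1 0| := by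
          rw [abs_mul, abs_mul, abs_mul]
          norm_num
  refine h1.trans ?_
  have h2 : |∫ x : ℝ, (v1 x)^2 * Real.sign x| ≤ ∫ x : ℝ, (v1 x)^2 := by
    have hn := norm_integral_le_integral_norm (μ := volume) (fun x : ℝ => (v1 x)^2 * Real.sign x)
    simp only [Real.norm_eq_abs] at hn
    refine hn.trans ?_
    apply integral_mono hS.abs hB
    intro x
    dsimp only
    rw [abs_mul, abs_pow, sq_abs]
    calc (v1 x)^2 * |Real.sign x| ≤ (v1 x)^2 * 1 :=
          mul_le_mul_of_nonneg_left (by simpa using hsgn_bdd x) (sq_nonneg _)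
      _ = (v1 x)^2 := mul_one _
  linarith
end

section
/- Let c > 0 and let I₁, I₂ : [0,∞) → [0,∞) be continuously differentiable functions satisfying I₁'(t) + c I₁(t) + I₂'(t) ≤ 0 for all t ≥ 0. Then for every t ≥ 0, I₁(t) ≤ (I₁(0) + I₂(0)) e^{−ct} + sup_{0 ≤ s ≤ t} I₂(s). -/
open MeasureTheory Real

/-- Grönwall-type lemma: if `I₁, I₂ : [0,∞) → [0,∞)` are `C¹` with
`I₁' + c I₁ + I₂' ≤ 0` on `[0,∞)` for some `c > 0`, then
`I₁(t) ≤ (I₁(0) + I₂(0)) e^{-ct} + sup_{0 ≤ s ≤ t} I₂(s)`. -/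
theorem gronwall_high_low_frequency
    (c : ℝ) (hc : 0 < c) (I₁ I₂ : ℝ → ℝ)
    (hI₁ : ContDiff ℝ 1 I₁) (hI₂ : ContDiff ℝ 1 I₂)
    (hI₁_nonneg : ∀ t : ℝ, 0 ≤ t → 0 ≤ I₁ t)
    (hI₂_nonneg : ∀ t : ℝ, 0 ≤ t → 0 ≤ I₂ t)
    (hdiff : ∀ t : ℝ, 0 ≤ t → deriv I₁ t + c * I₁ t + deriv I₂ t ≤ 0) :
    ∀ t : ℝ, 0 ≤ t →
      I₁ t ≤ (I₁ 0 + I₂ 0) * Real.exp (-c * t) + sSup (I₂ '' Set.Icc 0 t) := by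
  intro t ht
  set M := sSup (I₂ '' Set.Icc 0 t) with hM
  have hbdd : BddAbove (I₂ '' Set.Icc 0 t) :=
    (isCompact_Icc.image hI₂.continuous).bddAbove
  have hMle : ∀ s ∈ Set.Icc (0:ℝ) t, I₂ s ≤ M := fun s hs =>
    le_csSup hbdd ⟨s, hs, rfl⟩
  have hM0 : 0 ≤ M := le_trans (hI₂_nonneg 0 le_rfl) (hMle 0 ⟨le_rfl, ht⟩)
  set g : ℝ → ℝ := fun s => Real.exp (c*s) * (I₁ s + I₂ s - M) with hg
  have hd : ∀ s : ℝ, HasDerivAt g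
      (c * Real.exp (c*s) * (I₁ s + I₂ s - M)
        + Real.exp (c*s) * (deriv I₁ s + deriv I₂ s)) s := by
    intro s
    have h1 : HasDerivAt (fun s => Real.exp (c*s)) (c * Real.exp (c*s)) s := by
      have := (Real.hasDerivAt_exp (c*s)).comp s ((hasDerivAt_id s).const_mul c)
      simpa [mul_comm, Function.comp_def] using this
    have h2 : HasDerivAt (fun s => I₁ s + I₂ s - M) (deriv I₁ s + deriv I₂ s) s :=
      (((hI₁.differentiable one_ne_zero s).hasDerivAt).add
        ((hI₂.differentiable one_ne_zero s).hasDerivAt)).sub_const M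
    exact h1.mul h2
  have hanti : AntitoneOn g (Set.Icc 0 t) := by
    apply antitoneOn_of_deriv_nonpos (convex_Icc 0 t)
    · exact fun s _ => ((hd s).differentiableAt.continuousAt).continuousWithinAt
    · intro s _; exact (hd s).differentiableAt.differentiableWithinAt
    · intro s hs
      rw [(hd s).deriv]
      rw [interior_Icc] at hs
      have h3 := hdiff s (le_of_lt hs.1)
      have h4 := hMle s ⟨le_of_lt hs.1, le_of_lt hs.2⟩
      have hexp : (0:ℝ) < Real.exp (c*s) := Real.exp_pos _
      nlinarith [mul_le_mul_of_nonneg_left h3 (le_of_lt hexp),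
        mul_le_mul_of_nonneg_left h4 (le_of_lt (mul_pos hc hexp))]
  have hgt : g t ≤ g 0 := hanti ⟨le_rfl, ht⟩ ⟨ht, le_rfl⟩ ht
  have hg0 : g 0 = I₁ 0 + I₂ 0 - M := by simp [hg]
  have hgt' : Real.exp (c*t) * (I₁ t + I₂ t - M) ≤ I₁ 0 + I₂ 0 - M := by
    rw [← hg0]; exact hgt
  have hE : Real.exp (-c*t) * Real.exp (c*t) = 1 := by
    rw [← Real.exp_add]; ring_nf; exact Real.exp_zero
  have hEpos : (0:ℝ) < Real.exp (-c*t) := Real.exp_pos _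
  have key := mul_le_mul_of_nonneg_left hgt' (le_of_lt hEpos)
  have hI₂t := hI₂_nonneg t ht
  rw [← mul_assoc, hE, one_mul] at key
  nlinarith [key, hI₂t, mul_nonneg (le_of_lt hEpos) hM0]
end

section
/- The function u : ℝ × ℝ → ℝ defined by u(t,x) = (6/5)[sech²(x + (12/5)t) − 2 tanh(x + (12/5)t) − 2] is a classical solution of the KdV–Burgers equation u_t − u_xx + u u_x = ν u_xxx with ν = −1/10; that is, u_t(t,x) − u_xx(t,x) + u(t,x) u_x(t,x) + (1/10) u_xxx(t,x) = 0 for all (t,x) ∈ ℝ × ℝ. -/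
open Real

private lemma tanh_hasDeriv (y : ℝ) :
    HasDerivAt Real.tanh (1 - Real.tanh y ^ 2) y := by
  have hc := (Real.cosh_pos y).ne'
  have h := (Real.hasDerivAt_sinh y).div (Real.hasDerivAt_cosh y) hc
  have heq : Real.tanh = fun y => Real.sinh y / Real.cosh y :=
    funext fun z => Real.tanh_eq_sinh_div_cosh z
  rw [heq]
  refine h.congr_deriv (Eq.symm ?_)
  show 1 - (Real.sinh y / Real.cosh y) ^ 2 = _
  rw [div_pow, one_sub_div (pow_ne_zero 2 hc)]
  ring

private lemma tanh_shift (c x : ℝ) :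
    HasDerivAt (fun x : ℝ => Real.tanh (x + c)) (1 - Real.tanh (x + c) ^ 2) x := by
  simpa [Function.comp_def] using (tanh_hasDeriv (x + c)).comp x ((hasDerivAt_id x).add_const c)

private lemma L1 (c x : ℝ) :
    HasDerivAt (fun x : ℝ => -(6/5) * (1 + Real.tanh (x + c)) ^ 2)
      (-(12/5) * (1 + Real.tanh (x + c)) ^ 2 * (1 - Real.tanh (x + c))) x := by
  have h := (((tanh_shift c x).const_add 1).pow 2).const_mul (-(6/5) : ℝ)
  refine h.congr_deriv ?_
  norm_num
  ring

private lemma L2 (c x : ℝ) :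
    HasDerivAt (fun x : ℝ => -(12/5) * (1 + Real.tanh (x + c)) ^ 2 * (1 - Real.tanh (x + c)))
      (-(12/5) * (1 + Real.tanh (x + c)) ^ 2 * (1 - Real.tanh (x + c))
        * (1 - 3 * Real.tanh (x + c))) x := by
  have h := ((((tanh_shift c x).const_add 1).pow 2).const_mul (-(12/5) : ℝ)).mul
    ((tanh_shift c x).const_sub 1)
  refine h.congr_deriv ?_
  norm_num
  ring

private lemma L3 (c x : ℝ) :
    HasDerivAt (fun x : ℝ => -(12/5) * (1 + Real.tanh (x + c)) ^ 2 * (1 - Real.tanh (x + c))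
        * (1 - 3 * Real.tanh (x + c)))
      (-(12/5) * (1 + Real.tanh (x + c)) ^ 2 * (1 - Real.tanh (x + c))
        * (12 * Real.tanh (x + c) ^ 2 - 6 * Real.tanh (x + c) - 2)) x := by
  have h := (((((tanh_shift c x).const_add 1).pow 2).const_mul (-(12/5) : ℝ)).mul
    ((tanh_shift c x).const_sub 1)).mul (((tanh_shift c x).const_mul 3).const_sub 1)
  refine h.congr_deriv ?_
  norm_num
  ring

private lemma Lt (x t : ℝ) :
    HasDerivAt (fun s : ℝ => -(6/5) * (1 + Real.tanh (x + (12/5) * s)) ^ 2)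
      ((12/5) * (-(12/5) * (1 + Real.tanh (x + (12/5) * t)) ^ 2
        * (1 - Real.tanh (x + (12/5) * t)))) t := by
  have hin : HasDerivAt (fun s : ℝ => x + (12/5) * s) (12/5) t := by
    simpa using ((hasDerivAt_id t).const_mul (12/5 : ℝ)).const_add x
  have h := (tanh_hasDeriv (x + (12/5) * t)).comp t hin
  have h2 := ((h.const_add 1).pow 2).const_mul (-(6/5) : ℝ)
  refine h2.congr_deriv ?_
  norm_num
  ring

/-- The explicit profile `u(t,x) = (6/5)[sech²(x + (12/5)t) - 2 tanh(x + (12/5)t) - 2]`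
is a classical solution of the KdV–Burgers equation with `ν = -1/10`:
`u_t - u_xx + u u_x + (1/10) u_xxx = 0`. -/
theorem explicit_kdv_burgers_front
    (u : ℝ → ℝ → ℝ)
    (hu : ∀ t x : ℝ, u t x
      = (6 / 5) * ((1 / Real.cosh (x + (12 / 5) * t)) ^ 2
          - 2 * Real.tanh (x + (12 / 5) * t) - 2)) :
    ∀ t x : ℝ,
      deriv (fun s => u s x) t - deriv (deriv (u t)) x + u t x * deriv (u t) x
        + (1 / 10) * deriv (deriv (deriv (u t))) x = 0 := by
  have hsech : ∀ y : ℝ, (1 / Real.cosh y) ^ 2 = 1 - Real.tanh y ^ 2 := by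
    intro y
    have hc := (Real.cosh_pos y).ne'
    rw [Real.tanh_eq_sinh_div_cosh]
    field_simp
    linarith [Real.cosh_sq y]
  have hu' : ∀ t x : ℝ, u t x = -(6/5) * (1 + Real.tanh (x + (12/5) * t)) ^ 2 := by
    intro t x
    rw [hu t x, hsech]
    ring
  intro t x
  have hUt : u t = fun x => -(6/5) * (1 + Real.tanh (x + (12/5) * t)) ^ 2 :=
    funext fun x => hu' t x
  have hD1 : deriv (u t) = fun x =>
      -(12/5) * (1 + Real.tanh (x + (12/5) * t)) ^ 2 * (1 - Real.tanh (x + (12/5) * t)) := by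
    funext y
    rw [hUt]
    exact (L1 ((12/5) * t) y).deriv
  have hD2 : deriv (deriv (u t)) = fun x =>
      -(12/5) * (1 + Real.tanh (x + (12/5) * t)) ^ 2 * (1 - Real.tanh (x + (12/5) * t))
        * (1 - 3 * Real.tanh (x + (12/5) * t)) := by
    funext y
    rw [hD1]
    exact (L2 ((12/5) * t) y).deriv
  have hD3 : deriv (deriv (deriv (u t))) = fun x =>
      -(12/5) * (1 + Real.tanh (x + (12/5) * t)) ^ 2 * (1 - Real.tanh (x + (12/5) * t))
        * (12 * Real.tanh (x + (12/5) * t) ^ 2 - 6 * Real.tanh (x + (12/5) * t) - 2) := by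
    funext y
    rw [hD2]
    exact (L3 ((12/5) * t) y).deriv
  have hDt : deriv (fun s => u s x) t = (12/5) * (-(12/5)
      * (1 + Real.tanh (x + (12/5) * t)) ^ 2 * (1 - Real.tanh (x + (12/5) * t))) := by
    have heq : (fun s => u s x) = fun s => -(6/5) * (1 + Real.tanh (x + (12/5) * s)) ^ 2 :=
      funext fun s => hu' s x
    rw [heq]
    exact (Lt x t).deriv
  rw [hDt, hD3, hD2, hD1, hu' t x]
  ring
end
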